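/- Let A be an n × m' structured pattern with n ≤ m'. Then: (i) the generic rank of A equals n if and only if A is not of form (n); (ii) for 1 ≤ t < n, the generic rank of A equals t if and only if A is of form (t+1) but not of form (t). -/

import Mathlib

/-- The generic rank of a structured pattern: the maximal rank achieved by a realization,
i.e. by a real matrix vanishing at every fixed-zero position. -/
noncomputable def gRank {n : ℕ} {α : Type} [Fintype α] (P : Fin n → α → Prop) : ℕ :=
  sSup {t : ℕ | ∃ M : Matrix (Fin n) α ℝ, (∀ k c, ¬ P k c → M k c = 0) ∧ M.rank = t}

/-- An `n × m'` structured pattern is of form `(t)` if for some `k` with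
`m' − t < k ≤ m'` it contains an all-fixed-zero submatrix of size
`(n + m' − t − k + 1) × k`. -/
def FormT {n m' : ℕ} (P : Fin n → Fin m' → Prop) (t : ℕ) : Prop :=
  ∃ k : ℕ, m' - t < k ∧ k ≤ m' ∧
    ∃ (R : Finset (Fin n)) (C : Finset (Fin m')),
      R.card = n + m' - t - k + 1 ∧ C.card = k ∧
      ∀ i ∈ R, ∀ j ∈ C, ¬ P i j

section RankHelp
open Matrix Finset Module
variable {n m' : ℕ}

lemma myrank_add_le (A B : Matrix (Fin n) (Fin m') ℝ) :
    (A + B).rank ≤ A.rank + B.rank := by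
  have hml : (A + B).mulVecLin = A.mulVecLin + B.mulVecLin := by
    ext v i; simp [Matrix.add_mulVec]
  have h : LinearMap.range (A + B).mulVecLin ≤
      LinearMap.range A.mulVecLin ⊔ LinearMap.range B.mulVecLin := by
    rw [hml]
    rintro x ⟨v, rfl⟩
    exact Submodule.add_mem_sup ⟨v, rfl⟩ ⟨v, rfl⟩
  exact (Submodule.finrank_mono h).trans
    (Submodule.finrank_add_le_finrank_add_finrank _ _)

lemma myrank_le_cols_support (M : Matrix (Fin n) (Fin m') ℝ) (S : Finset (Fin m'))
    (h : ∀ j ∉ S, ∀ i, M i j = 0) : M.rank ≤ S.card := by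
  classical
  rw [Matrix.rank_eq_finrank_span_cols]
  have hsub : Set.range Mᵀ ⊆ insert 0 ((S.image (fun j => Mᵀ j) : Finset (Fin n → ℝ)) : Set (Fin n → ℝ)) := by
    rintro v ⟨j, rfl⟩
    by_cases hj : j ∈ S
    · exact Set.mem_insert_of_mem _ (by simpa using ⟨j, hj, rfl⟩)
    · left
      funext i
      exact h j hj i
  calc finrank ℝ (Submodule.span ℝ (Set.range Mᵀ))
      ≤ finrank ℝ (Submodule.span ℝ (insert 0 ((S.image (fun j => Mᵀ j) : Finset (Fin n → ℝ)) : Set (Fin n → ℝ)))) :=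
        Submodule.finrank_mono (Submodule.span_mono hsub)
    _ = finrank ℝ (Submodule.span ℝ ((S.image (fun j => Mᵀ j) : Finset (Fin n → ℝ)) : Set (Fin n → ℝ))) := by
        rw [Submodule.span_insert_zero]
    _ ≤ (S.image (fun j => Mᵀ j)).card := finrank_span_finset_le_card _
    _ ≤ S.card := Finset.card_image_le

lemma myrank_le_rows_support (M : Matrix (Fin n) (Fin m') ℝ) (S : Finset (Fin n))
    (h : ∀ i ∉ S, ∀ j, M i j = 0) : M.rank ≤ S.card := by
  rw [← Matrix.rank_transpose]
  exact myrank_le_cols_support Mᵀ S (fun i hi j => h i hi j)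

lemma myrank_le_of_zero_block (M : Matrix (Fin n) (Fin m') ℝ) (R : Finset (Fin n))
    (C : Finset (Fin m')) (hz : ∀ i ∈ R, ∀ j ∈ C, M i j = 0) :
    M.rank ≤ (n - R.card) + (m' - C.card) := by
  classical
  set M₁ : Matrix (Fin n) (Fin m') ℝ := fun i j => if j ∈ C then M i j else 0 with hM₁
  set M₂ : Matrix (Fin n) (Fin m') ℝ := fun i j => if j ∈ C then 0 else M i j with hM₂
  have hM : M = M₁ + M₂ := by
    ext i j; rw [Matrix.add_apply]; by_cases h : j ∈ C <;> simp [hM₁, hM₂, h]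
  have h1 : M₁.rank ≤ n - R.card := by
    have := myrank_le_rows_support M₁ Rᶜ (by
      intro i hi j
      simp only [Finset.mem_compl, not_not] at hi
      by_cases hj : j ∈ C
      · simp [hM₁, hj, hz i hi j hj]
      · simp [hM₁, hj])
    simpa [Finset.card_compl] using this
  have h2 : M₂.rank ≤ m' - C.card := by
    have := myrank_le_cols_support M₂ Cᶜ (by
      intro j hj i
      simp only [Finset.mem_compl, not_not] at hj
      simp [hM₂, hj])
    simpa [Finset.card_compl] using this
  rw [hM]
  exact (myrank_add_le _ _).trans (add_le_add h1 h2)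


lemma not_formT_exists_realization {P : Fin n → Fin m' → Prop} {t : ℕ} (hnm : n ≤ m')
    (ht1 : 1 ≤ t) (htn : t ≤ n) (hf : ¬ FormT P t) :
    ∃ M : Matrix (Fin n) (Fin m') ℝ, (∀ i j, ¬ P i j → M i j = 0) ∧ t ≤ M.rank := by
  classical
  set d := n - t with hd
  set N : Fin n → Finset (Fin m') := fun i => univ.filter (fun j => P i j) with hN
  set T : Fin n → Finset (Fin m' ⊕ Fin d) :=
    fun i => (N i).image Sum.inl ∪ univ.image Sum.inr with hT
  have hall : ∀ s : Finset (Fin n), s.card ≤ (s.biUnion T).card := by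
    intro s
    by_contra hcon
    push_neg at hcon
    have hsne : s.Nonempty := by
      rcases s.eq_empty_or_nonempty with rfl | h
      · simp at hcon
      · exact h
    obtain ⟨i₀, hi₀⟩ := hsne
    set B := s.biUnion N with hB
    have hsubset : (B.image Sum.inl ∪ (univ : Finset (Fin d)).image Sum.inr)
        ⊆ s.biUnion T := by
      intro x hx
      rcases Finset.mem_union.mp hx with hx | hx
      · obtain ⟨j, hj, rfl⟩ := Finset.mem_image.mp hx
        obtain ⟨i, hi, hji⟩ := Finset.mem_biUnion.mp hj
        exact Finset.mem_biUnion.mpr ⟨i, hi,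
          Finset.mem_union_left _ (Finset.mem_image.mpr ⟨j, hji, rfl⟩)⟩
      · obtain ⟨y, _, rfl⟩ := Finset.mem_image.mp hx
        exact Finset.mem_biUnion.mpr ⟨i₀, hi₀,
          Finset.mem_union_right _ (Finset.mem_image.mpr ⟨y, Finset.mem_univ _, rfl⟩)⟩
    have hdisj : Disjoint (B.image Sum.inl) ((univ : Finset (Fin d)).image Sum.inr) := by
      simp [Finset.disjoint_left]
    have hcard : B.card + d ≤ (s.biUnion T).card := by
      have := Finset.card_le_card hsubset
      rwa [Finset.card_union_of_disjoint hdisj,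
        Finset.card_image_of_injective _ Sum.inl_injective,
        Finset.card_image_of_injective _ Sum.inr_injective, Finset.card_univ,
        Fintype.card_fin] at this
    have hlt : B.card + d + 1 ≤ s.card := by omega
    have hsn : s.card ≤ n := by simpa using Finset.card_le_card (Finset.subset_univ s)
    have hBt : B.card < t := by omega
    have htm : t ≤ m' := htn.trans hnm
    set k := m' - B.card with hk
    obtain ⟨R, hRs, hRcard⟩ := Finset.exists_subset_card_eq (s:=s) (n:= n + m' - t - k + 1) (by omega)
    refine hf ⟨k, by omega, by omega, R, Bᶜ, hRcard, ?_, ?_⟩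
    · rw [Finset.card_compl, Fintype.card_fin]
    · intro i hi j hj hP
      have : j ∈ B := Finset.mem_biUnion.mpr ⟨i, hRs hi, by simp [hN, hP]⟩
      exact (Finset.mem_compl.mp hj) this
  obtain ⟨f, hfinj, hft⟩ := (Finset.all_card_le_biUnion_card_iff_exists_injective T).mp hall
  have hP : ∀ i j, f i = Sum.inl j → P i j := by
    intro i j hij
    have := hft i
    rw [hT] at this
    rcases Finset.mem_union.mp this with h | h
    · obtain ⟨j', hj', hjj⟩ := Finset.mem_image.mp h
      rw [hij] at hjj
      obtain rfl : j' = j := Sum.inl_injective hjj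
      simpa [hN] using hj'
    · obtain ⟨y, _, hy⟩ := Finset.mem_image.mp h
      rw [hij] at hy
      exact absurd hy (Sum.inr_ne_inl)
  set M : Matrix (Fin n) (Fin m') ℝ := fun i j => if f i = Sum.inl j then 1 else 0 with hM
  refine ⟨M, ?_, ?_⟩
  · intro i j hPij
    have : f i ≠ Sum.inl j := fun h => hPij (hP i j h)
    simp [hM, this]
  · -- rank lower bound
    set Q : Matrix (Fin m') (Fin n) ℝ := fun j i => if f i = Sum.inl j then 1 else 0 with hQ
    set w : Fin n → ℝ := fun i => if (f i).isLeft then 1 else 0 with hw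
    have hMQ : M * Q = Matrix.diagonal w := by
      ext i i'
      rw [Matrix.mul_apply]
      rcases h : f i with a | a
      · rcases h' : f i' with b | b
        · have : ∀ j, M i j * Q j i' = if a = j then (if b = j then (1:ℝ) else 0) else 0 := by
            intro j
            simp only [hM, hQ, h, h', Sum.inl.injEq]
            split_ifs <;> ring
          rw [Finset.sum_congr rfl (fun j _ => this j)]
          rw [Finset.sum_ite_eq]
          simp only [Finset.mem_univ, if_true]
          by_cases hab : i = i'
          · subst hab
            have : b = a := by rw [h] at h'; exact (Sum.inl_injective h').symm
            simp [Matrix.diagonal, hw, h, this]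
          · have hba : b ≠ a := by
              intro hba
              apply hab
              apply hfinj
              rw [h, h', hba]
            simp [Matrix.diagonal, hw, hab, hba]
        · have : ∀ j, M i j * Q j i' = 0 := by
            intro j; simp [hQ, h']
          rw [Finset.sum_congr rfl (fun j _ => this j)]
          have hii : i ≠ i' := by
            intro hh; rw [hh, h'] at h; exact absurd h (by simp)
          simp [Matrix.diagonal, hii]
      · have : ∀ j, M i j * Q j i' = 0 := by
          intro j; simp [hM, h]
        rw [Finset.sum_congr rfl (fun j _ => this j)]
        by_cases hii : i = i'
        · subst hii; simp [Matrix.diagonal, hw, h]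
        · simp [Matrix.diagonal, hii]
    have hrankMQ : (M * Q).rank = Fintype.card {i // w i ≠ 0} := by
      rw [hMQ]; exact Matrix.rank_diagonal w
    have hcardw : Fintype.card {i // w i ≠ 0} = (univ.filter (fun i => (f i).isLeft)).card := by
      rw [Fintype.card_subtype]
      congr 1
      apply Finset.filter_congr
      intro i _
      simp only [hw]
      constructor
      · intro hne
        by_contra hL
        simp [hL] at hne
      · intro hL
        simp [hL]
    have hSt : t ≤ (univ.filter (fun i => (f i).isLeft)).card := by
      have hpart := Finset.card_filter_add_card_filter_not
        (s := (univ : Finset (Fin n))) (p := fun i => (f i).isLeft)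
      rw [Finset.card_univ, Fintype.card_fin] at hpart
      have hR : (univ.filter (fun i => ¬ (f i).isLeft)).card ≤ d := by
        have : (univ.filter (fun i => ¬ (f i).isLeft)).card
            ≤ ((univ : Finset (Fin d)).image (Sum.inr : Fin d → Fin m' ⊕ Fin d)).card := by
          apply Finset.card_le_card_of_injOn f
          · intro i hi
            simp only [Finset.coe_filter, Finset.mem_coe, Finset.mem_filter, Set.mem_setOf_eq] at hi
            rcases hfi : f i with a | a
            · rw [hfi] at hi; simp at hi
            · exact Finset.mem_image.mpr ⟨a, Finset.mem_univ _, rfl⟩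
          · exact fun a _ b _ h => hfinj h
        rwa [Finset.card_image_of_injective _ Sum.inr_injective, Finset.card_univ,
          Fintype.card_fin] at this
      omega
    have : (M * Q).rank ≤ M.rank := Matrix.rank_mul_le_left M Q
    omega

lemma formT_rank_lt {P : Fin n → Fin m' → Prop} {t : ℕ} (hnm : n ≤ m') (ht1 : 1 ≤ t)
    (htn : t ≤ n) (hf : FormT P t) (M : Matrix (Fin n) (Fin m') ℝ)
    (hM : ∀ i j, ¬ P i j → M i j = 0) : M.rank < t := by
  obtain ⟨k, hk1, hk2, R, C, hR, hC, hzero⟩ := hf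
  have hz : ∀ i ∈ R, ∀ j ∈ C, M i j = 0 := fun i hi j hj => hM i j (hzero i hi j hj)
  have h := myrank_le_of_zero_block M R C hz
  rw [hR, hC] at h
  omega

/-- For an `n × m'` structured pattern `A` with `n ≤ m'`:
(i) its generic rank equals `n` iff `A` is not of form `(n)`;
(ii) for `1 ≤ t < n`, its generic rank equals `t` iff `A` is of form `(t+1)` but not of
form `(t)`. -/
theorem gRank_iff_formT {n m' : ℕ} (P : Fin n → Fin m' → Prop) (hnm : n ≤ m') :
    (gRank P = n ↔ ¬ FormT P n) ∧
      ∀ t : ℕ, 1 ≤ t → t < n → (gRank P = t ↔ FormT P (t + 1) ∧ ¬ FormT P t) := by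
  set 𝒮 := {t : ℕ | ∃ M : Matrix (Fin n) (Fin m') ℝ,
      (∀ k c, ¬ P k c → M k c = 0) ∧ M.rank = t} with h𝒮
  have hne : 𝒮.Nonempty := ⟨0, 0, fun k c _ => rfl, Matrix.rank_zero⟩
  have hbdd : BddAbove 𝒮 := by
    refine ⟨n, ?_⟩
    rintro x ⟨M, _, rfl⟩
    exact M.rank_le_height
  have hmem : gRank P ∈ 𝒮 := Nat.sSup_mem hne hbdd
  obtain ⟨Mmax, hMmax, hMrank⟩ := hmem
  have hub : ∀ x ∈ 𝒮, x ≤ gRank P := fun x hx => le_csSup hbdd hx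
  have hgn : gRank P ≤ n := hMrank ▸ Mmax.rank_le_height
  have key_lt : ∀ t : ℕ, 1 ≤ t → t ≤ n → FormT P t → gRank P < t := by
    intro t h1 h2 hf
    have := formT_rank_lt hnm h1 h2 hf Mmax (fun i j h => hMmax i j h)
    omega
  have key_ge : ∀ t : ℕ, 1 ≤ t → t ≤ n → ¬ FormT P t → t ≤ gRank P := by
    intro t h1 h2 hf
    obtain ⟨M, hM1, hM2⟩ := not_formT_exists_realization hnm h1 h2 hf
    exact hM2.trans (hub M.rank ⟨M, hM1, rfl⟩)
  constructor
  · rcases Nat.eq_zero_or_pos n with rfl | hn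
    · constructor
      · rintro _ ⟨k, hk1, hk2, -⟩
        omega
      · intro _
        omega
    · constructor
      · intro h hf
        have := key_lt n hn le_rfl hf
        omega
      · intro hf
        have := key_ge n hn le_rfl hf
        omega
  · intro t ht1 htn
    constructor
    · intro h
      constructor
      · by_contra hf
        have := key_ge (t + 1) (by omega) (by omega) hf
        omega
      · intro hf
        have := key_lt t ht1 (by omega) hf
        omega
    · rintro ⟨h1, h2⟩
      have ha := key_lt (t + 1) (by omega) (by omega) h1
      have hb := key_ge t ht1 (by omega) h2
      omega


end RankHelp
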